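/- Let m ≥ 1 and n ≥ m be integers, and let F denote the Fibonacci sequence normalised by F(1) = F(2) = 1, F(x+2) = F(x+1) + F(x). Then the number of finite sequences (i_1, j_1, i_2, j_2, …, i_k, j_k) of even length 2k (k ≥ 0, the empty sequence included), with every i_t an integer in {0, 1, …, n−1}, every j_t an integer in {1, …, m}, and satisfying i_t < j_t for all 1 ≤ t ≤ k and j_t ≤ i_{t+1} for all 1 ≤ t ≤ k−1, equals F(2m+1). -/

import Mathlib

open Finset

namespace Stmt11Aux

lemma sm_add {r N : ℕ} {f : Fin r → Fin N} (hf : StrictMono f) (d : ℕ) :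
    ∀ (a : ℕ) (h1 : a < r) (h2 : a + d < r), (f ⟨a, h1⟩ : ℕ) + d ≤ (f ⟨a + d, h2⟩ : ℕ) := by
  induction d with
  | zero =>
    intro a h1 h2
    have he : (⟨a + 0, h2⟩ : Fin r) = ⟨a, h1⟩ := rfl
    rw [he]
    omega
  | succ d ih =>
    intro a h1 h2
    have hd : a + d < r := by omega
    have h2' := ih a h1 hd
    have h3 : (f ⟨a + d, hd⟩ : ℕ) < (f ⟨a + (d + 1), h2⟩ : ℕ) :=
      hf (Fin.mk_lt_mk.mpr (by omega))
    omega

lemma sm_le' {r N : ℕ} {f : Fin r → Fin N} (hf : StrictMono f) :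
    ∀ (a : ℕ) (h1 : a < r), a ≤ (f ⟨a, h1⟩ : ℕ) := by
  intro a
  induction a with
  | zero => intro h1; exact Nat.zero_le _
  | succ a ih =>
    intro h1
    have ha : a < r := by omega
    have h2 := ih ha
    have h3 : (f ⟨a, ha⟩ : ℕ) < (f ⟨a + 1, h1⟩ : ℕ) := hf (Fin.mk_lt_mk.mpr (by omega))
    omega

lemma sm_ub' {r N : ℕ} {f : Fin r → Fin N} (hf : StrictMono f) (a : ℕ) (h1 : a < r) :
    (f ⟨a, h1⟩ : ℕ) + (r - 1 - a) < N := by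
  have hc : a + (r - 1 - a) < r := by omega
  have h := sm_add hf (r - 1 - a) a h1 hc
  have hb : (f ⟨a + (r - 1 - a), hc⟩ : ℕ) < N := (f ⟨a + (r - 1 - a), hc⟩).2
  omega

lemma strictMono_adj {r N : ℕ} {f : Fin r → Fin N}
    (h : ∀ (a : ℕ) (h1 : a < r) (h2 : a + 1 < r), f ⟨a, h1⟩ < f ⟨a + 1, h2⟩) :
    StrictMono f := by
  have key : ∀ (d a : ℕ) (h1 : a < r) (h2 : a + d < r), 0 < d →
      f ⟨a, h1⟩ < f ⟨a + d, h2⟩ := by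
    intro d
    induction d with
    | zero => intro a h1 h2 hd; exact absurd hd (by omega)
    | succ d ih =>
      intro a h1 h2 hd
      rcases Nat.eq_zero_or_pos d with rfl | hdpos
      · exact h a h1 h2
      · have hmid : a + d < r := by omega
        exact lt_trans (ih a h1 hmid hdpos) (h (a + d) hmid h2)
  intro a b hab
  have hab' : (a : ℕ) < (b : ℕ) := hab
  have hlt : a.1 + (b.1 - a.1) < r := by have := b.2; omega
  have key2 := key (b.1 - a.1) a.1 a.2 hlt (by omega)
  have e2 : (⟨a.1 + (b.1 - a.1), hlt⟩ : Fin r) = b :=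
    Fin.ext (show a.1 + (b.1 - a.1) = b.1 by omega)
  have e1 : (⟨a.1, a.2⟩ : Fin r) = a := rfl
  rw [e2, e1] at key2
  exact key2

abbrev MT (m : ℕ) := Σ k : Fin (m + 1), {s : Finset (Fin (m + (k : ℕ))) // s.card = 2 * (k : ℕ)}

def PhiRaw (m : ℕ) (x : MT m) : (k : ℕ) × (Fin k → ℕ) × (Fin k → ℕ) :=
  ⟨(x.1 : ℕ),
   fun t => (x.2.1.orderEmbOfFin x.2.2 ⟨2 * t.1, by have := t.2; omega⟩ : ℕ) - t.1,
   fun t => (x.2.1.orderEmbOfFin x.2.2 ⟨2 * t.1 + 1, by have := t.2; omega⟩ : ℕ) - t.1⟩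

lemma PhiRaw_mem (m n : ℕ) (hm : 1 ≤ m) (hn : m ≤ n) (x : MT m) :
    (∀ t, (PhiRaw m x).2.1 t < n) ∧
    (∀ t, 1 ≤ (PhiRaw m x).2.2 t ∧ (PhiRaw m x).2.2 t ≤ m) ∧
    (∀ t : Fin (PhiRaw m x).1, (PhiRaw m x).2.1 t < (PhiRaw m x).2.2 t) ∧
    (∀ t s : Fin (PhiRaw m x).1, (t : ℕ) + 1 = (s : ℕ) →
      (PhiRaw m x).2.2 t ≤ (PhiRaw m x).2.1 s) := by
  obtain ⟨k, s, hs⟩ := x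
  have hk : (k : ℕ) ≤ m := by have := k.2; omega
  have hsm : StrictMono (s.orderEmbOfFin hs) := (s.orderEmbOfFin hs).strictMono
  simp only [PhiRaw]
  refine ⟨fun t => ?_, fun t => ?_, fun t => ?_, fun t u htu => ?_⟩
  · have ht := t.2
    have h1 : (2 * t.1 : ℕ) ≤ (s.orderEmbOfFin hs ⟨2 * t.1, by omega⟩ : ℕ) := sm_le' hsm _ _
    have h3 : (s.orderEmbOfFin hs ⟨2 * t.1 + 1, by omega⟩ : ℕ) +
        (2 * (k : ℕ) - 1 - (2 * t.1 + 1)) < m + (k : ℕ) := sm_ub' hsm _ _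
    have h4 : (s.orderEmbOfFin hs ⟨2 * t.1, by omega⟩ : ℕ) <
        (s.orderEmbOfFin hs ⟨2 * t.1 + 1, by omega⟩ : ℕ) := hsm (Fin.mk_lt_mk.mpr (by omega))
    omega
  · have ht := t.2
    have h2 : (2 * t.1 + 1 : ℕ) ≤ (s.orderEmbOfFin hs ⟨2 * t.1 + 1, by omega⟩ : ℕ) :=
      sm_le' hsm _ _
    have h3 : (s.orderEmbOfFin hs ⟨2 * t.1 + 1, by omega⟩ : ℕ) +
        (2 * (k : ℕ) - 1 - (2 * t.1 + 1)) < m + (k : ℕ) := sm_ub' hsm _ _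
    omega
  · have ht := t.2
    have h1 : (2 * t.1 : ℕ) ≤ (s.orderEmbOfFin hs ⟨2 * t.1, by omega⟩ : ℕ) := sm_le' hsm _ _
    have h4 : (s.orderEmbOfFin hs ⟨2 * t.1, by omega⟩ : ℕ) <
        (s.orderEmbOfFin hs ⟨2 * t.1 + 1, by omega⟩ : ℕ) := hsm (Fin.mk_lt_mk.mpr (by omega))
    omega
  · have ht := t.2
    have hu := u.2
    have h2 : (2 * t.1 + 1 : ℕ) ≤ (s.orderEmbOfFin hs ⟨2 * t.1 + 1, by omega⟩ : ℕ) :=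
      sm_le' hsm _ _
    have h5 : (s.orderEmbOfFin hs ⟨2 * t.1 + 1, by omega⟩ : ℕ) <
        (s.orderEmbOfFin hs ⟨2 * u.1, by omega⟩ : ℕ) := hsm (Fin.mk_lt_mk.mpr (by omega))
    omega

lemma PhiRaw_inj (m : ℕ) : Function.Injective (PhiRaw m) := by
  rintro ⟨k, s, hs⟩ ⟨k', s', hs'⟩ h
  have hkk : k = k' := Fin.ext (congrArg Sigma.fst h)
  subst hkk
  have h5 : HEq (PhiRaw m ⟨k, s, hs⟩).2 (PhiRaw m ⟨k, s', hs'⟩).2 := by rw [h]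
  have h6 : (PhiRaw m ⟨k, s, hs⟩).2 = (PhiRaw m ⟨k, s', hs'⟩).2 := eq_of_heq h5
  have hsm : StrictMono (s.orderEmbOfFin hs) := (s.orderEmbOfFin hs).strictMono
  have hsm' : StrictMono (s'.orderEmbOfFin hs') := (s'.orderEmbOfFin hs').strictMono
  have hee : ∀ l : Fin (2 * (k : ℕ)),
      (s.orderEmbOfFin hs l : ℕ) = (s'.orderEmbOfFin hs' l : ℕ) := by
    intro l
    have hl := l.2
    rcases Nat.even_or_odd l.1 with ⟨t, htl⟩ | ⟨t, htl⟩
    · have ht : t < (k : ℕ) := by omega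
      have hI := congrFun (congrArg Prod.fst h6) ⟨t, ht⟩
      simp only [PhiRaw] at hI
      have hA : 2 * t ≤ (s.orderEmbOfFin hs ⟨2 * t, by omega⟩ : ℕ) := sm_le' hsm _ _
      have hA' : 2 * t ≤ (s'.orderEmbOfFin hs' ⟨2 * t, by omega⟩ : ℕ) := sm_le' hsm' _ _
      have hlE : l = ⟨2 * t, by omega⟩ := Fin.ext (show l.1 = 2 * t by omega)
      rw [hlE]
      omega
    · have ht : t < (k : ℕ) := by omega
      have hJ := congrFun (congrArg Prod.snd h6) ⟨t, ht⟩
      simp only [PhiRaw] at hJ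
      have hA : 2 * t + 1 ≤ (s.orderEmbOfFin hs ⟨2 * t + 1, by omega⟩ : ℕ) := sm_le' hsm _ _
      have hA' : 2 * t + 1 ≤ (s'.orderEmbOfFin hs' ⟨2 * t + 1, by omega⟩ : ℕ) := sm_le' hsm' _ _
      have hlE : l = ⟨2 * t + 1, by omega⟩ := Fin.ext (show l.1 = 2 * t + 1 by omega)
      rw [hlE]
      omega
  have heqf : (⇑(s.orderEmbOfFin hs) : Fin (2 * (k : ℕ)) → Fin (m + (k : ℕ))) =
      ⇑(s'.orderEmbOfFin hs') := funext fun l => Fin.ext (hee l)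
  have hrange : (s : Set (Fin (m + (k : ℕ)))) = (s' : Set (Fin (m + (k : ℕ)))) := by
    rw [← Finset.range_orderEmbOfFin s hs, ← Finset.range_orderEmbOfFin s' hs', heqf]
  have hss : s = s' := Finset.coe_injective hrange
  subst hss
  rfl

lemma PhiRaw_surj (m : ℕ) (p : (k : ℕ) × (Fin k → ℕ) × (Fin k → ℕ))
    (h2 : ∀ t, 1 ≤ p.2.2 t ∧ p.2.2 t ≤ m)
    (h3 : ∀ t : Fin p.1, p.2.1 t < p.2.2 t)
    (h4 : ∀ t s : Fin p.1, (t : ℕ) + 1 = (s : ℕ) → p.2.2 t ≤ p.2.1 s) :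
    ∃ x : MT m, PhiRaw m x = p := by
  obtain ⟨k, I, J⟩ := p
  simp only at h2 h3 h4
  have Jlb : ∀ b (hb : b < k), b + 1 ≤ J ⟨b, hb⟩ := by
    intro b
    induction b with
    | zero => intro hb; have := h3 ⟨0, hb⟩; omega
    | succ b ih =>
      intro hb
      have hb' : b < k := by omega
      have hA := h4 ⟨b, hb'⟩ ⟨b + 1, hb⟩ rfl
      have hB := h3 ⟨b + 1, hb⟩
      have hC := ih hb'
      omega
  have hk : k ≤ m := by
    rcases Nat.eq_zero_or_pos k with h0 | h0
    · omega
    · have hA := Jlb (k - 1) (by omega)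
      have hB := (h2 ⟨k - 1, by omega⟩).2
      omega
  set g : Fin (2 * k) → Fin (m + k) := fun l =>
    ⟨if l.1 % 2 = 0 then I ⟨l.1 / 2, by have := l.2; omega⟩ + l.1 / 2
      else J ⟨l.1 / 2, by have := l.2; omega⟩ + l.1 / 2, by
      have hl := l.2
      split_ifs with hpar
      · have hA := h3 ⟨l.1 / 2, by omega⟩
        have hB := (h2 ⟨l.1 / 2, by omega⟩).2
        omega
      · have hB := (h2 ⟨l.1 / 2, by omega⟩).2
        omega⟩ with hgdef
  have hg : StrictMono g := by
    apply strictMono_adj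
    intro a ha1 ha2
    simp only [hgdef, Fin.mk_lt_mk]
    rcases Nat.mod_two_eq_zero_or_one a with hpar | hpar
    · rw [if_pos hpar, if_neg (by omega)]
      have he1 : (a + 1) / 2 = a / 2 := by omega
      simp only [he1]
      have hA := h3 ⟨a / 2, by omega⟩
      omega
    · rw [if_neg (by omega), if_pos (by omega)]
      have he1 : (a + 1) / 2 = a / 2 + 1 := by omega
      simp only [he1]
      have hA := h4 ⟨a / 2, by omega⟩ ⟨a / 2 + 1, by omega⟩ rfl
      omega
  have hcard : (Finset.univ.image g).card = 2 * k := by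
    rw [Finset.card_image_of_injective _ hg.injective, card_univ, Fintype.card_fin]
  have hge : g = ⇑((Finset.univ.image g).orderEmbOfFin hcard) :=
    Finset.orderEmbOfFin_unique hcard (fun x => Finset.mem_image_of_mem g (Finset.mem_univ x)) hg
  refine ⟨⟨⟨k, by omega⟩, Finset.univ.image g, hcard⟩, ?_⟩
  refine Sigma.ext rfl (heq_of_eq ?_)
  refine Prod.ext ?_ ?_
  · funext t
    change Fin k at t
    have ht := t.2
    simp only [PhiRaw, ← hge]
    simp only [hgdef]
    rw [if_pos (by omega)]
    have he1 : 2 * t.1 / 2 = t.1 := by omega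
    simp only [he1, Fin.eta]
    omega
  · funext t
    change Fin k at t
    have ht := t.2
    simp only [PhiRaw, ← hge]
    simp only [hgdef]
    rw [if_neg (by omega)]
    have he1 : (2 * t.1 + 1) / 2 = t.1 := by omega
    simp only [he1, Fin.eta]
    omega

end Stmt11Aux

open Stmt11Aux in
/-- Count of charge-0 boundary bound states: the number of alternating chains
`(i_1, j_1, …, i_k, j_k)` of even length `2k` (`k ≥ 0`, the empty chain included), with
`i_t ∈ {0, …, n−1}`, `j_t ∈ {1, …, m}`, `i_t < j_t` for `1 ≤ t ≤ k` and `j_t ≤ i_{t+1}`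
for `1 ≤ t ≤ k−1`, equals the Fibonacci number `F(2m+1)` (with `F(1) = F(2) = 1`,
i.e. `F = Nat.fib`). -/
theorem stmt11 (m n : ℕ) (hm : 1 ≤ m) (hn : m ≤ n) :
    Nat.card {p : (k : ℕ) × (Fin k → ℕ) × (Fin k → ℕ) //
      (∀ t, p.2.1 t < n) ∧ (∀ t, 1 ≤ p.2.2 t ∧ p.2.2 t ≤ m) ∧
      (∀ t : Fin p.1, p.2.1 t < p.2.2 t) ∧
      (∀ t s : Fin p.1, (t : ℕ) + 1 = (s : ℕ) → p.2.2 t ≤ p.2.1 s)} =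
    Nat.fib (2 * m + 1) := by
  classical
  have key : Nat.card (MT m) = Nat.card {p : (k : ℕ) × (Fin k → ℕ) × (Fin k → ℕ) //
      (∀ t, p.2.1 t < n) ∧ (∀ t, 1 ≤ p.2.2 t ∧ p.2.2 t ≤ m) ∧
      (∀ t : Fin p.1, p.2.1 t < p.2.2 t) ∧
      (∀ t s : Fin p.1, (t : ℕ) + 1 = (s : ℕ) → p.2.2 t ≤ p.2.1 s)} := by
    apply Nat.card_eq_of_bijective (fun x => ⟨PhiRaw m x, PhiRaw_mem m n hm hn x⟩)
    constructor
    · intro x y hxy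
      exact PhiRaw_inj m (congrArg Subtype.val hxy)
    · rintro ⟨p, hp1, hp2, hp3, hp4⟩
      obtain ⟨x, hx⟩ := PhiRaw_surj m p hp2 hp3 hp4
      exact ⟨x, Subtype.ext hx⟩
  rw [← key]
  have hcardMT : Nat.card (MT m) = ∑ j ∈ range (m + 1), (m + j).choose (2 * j) :=
    calc Nat.card (MT m)
        = ∑ k : Fin (m + 1),
            Fintype.card {s : Finset (Fin (m + (k : ℕ))) // s.card = 2 * (k : ℕ)} := by
          rw [Nat.card_eq_fintype_card, Fintype.card_sigma]
      _ = ∑ k : Fin (m + 1), (m + (k : ℕ)).choose (2 * (k : ℕ)) :=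
          Finset.sum_congr rfl fun k _ => by rw [Fintype.card_finset_len, Fintype.card_fin]
      _ = ∑ j ∈ range (m + 1), (m + j).choose (2 * j) :=
          Fin.sum_univ_eq_sum_range (fun j => (m + j).choose (2 * j)) (m + 1)
  rw [hcardMT]
  have hfib : Nat.fib (2 * m + 1) = ∑ l ∈ range (2 * m + 1), l.choose (2 * m - l) := by
    rw [Nat.fib_succ_eq_sum_choose, Finset.Nat.sum_antidiagonal_eq_sum_range_succ_mk]
  rw [hfib]
  have h0 : ∀ l ∈ range (2 * m + 1), l ∉ Finset.Ico m (2 * m + 1) →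
      Nat.choose l (2 * m - l) = 0 := by
    intro l hl hlno
    simp only [mem_range] at hl
    simp only [Finset.mem_Ico] at hlno
    exact Nat.choose_eq_zero_of_lt (by omega)
  have hsub : Finset.Ico m (2 * m + 1) ⊆ range (2 * m + 1) := by
    intro l hl
    simp only [Finset.mem_Ico] at hl
    simp only [mem_range]
    omega
  rw [← Finset.sum_subset hsub h0, Finset.sum_Ico_eq_sum_range,
    show 2 * m + 1 - m = m + 1 from by omega]
  exact Finset.sum_congr rfl fun j hj => by
    simp only [mem_range] at hj
    have h1 : 2 * m - (m + j) = (m + j) - 2 * j := by omega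
    rw [h1, Nat.choose_symm (by omega)]
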